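/- Consider a finite nonempty codebook C, a finite set Y of channel outputs, and a channel given by conditional probabilities W(y|x) ≥ 0 with Σ_{y∈Y} W(y|x) = 1 for every x ∈ C, with the transmitted codeword uniformly distributed over C. Fix a maximum-likelihood decoder d : Y → C, i.e. W(y|d(y)) = max_{x∈C} W(y|x) for all y. For an acceptance region A ⊆ Y define the undetected error probability P_ue(A) = (1/|C|) Σ_{y∈A} Σ_{x∈C, x≠d(y)} W(y|x) and the total error probability P_tot(A) = P_ue(A) + (1/|C|) Σ_{y∉A} Σ_{x∈C} W(y|x). For a threshold t > 0 let A_t = { y ∈ Y : W(y|d(y)) ≥ t · Σ_{x∈C, x≠d(y)} W(y|x) } be Forney's threshold test. Then the threshold test is optimal in the sense that for every acceptance region A ⊆ Y with P_tot(A) ≤ P_tot(A_t), one has P_ue(A) ≥ P_ue(A_t). -/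

import Mathlib

open Finset

/-- Undetected error probability of an acceptance region `A`:
`P_ue(A) = (1/|C|) Σ_{y∈A} Σ_{x∈C, x≠d(y)} W(y|x)`. -/
noncomputable def Pue {C Y : Type*} [Fintype C] [DecidableEq C]
    (W : C → Y → ℝ) (d : Y → C) (A : Finset Y) : ℝ :=
  (1 / (Fintype.card C : ℝ)) *
    ∑ y ∈ A, ∑ x ∈ Finset.univ.filter (fun x => x ≠ d y), W x y

/-- Total error probability of an acceptance region `A`:
`P_tot(A) = P_ue(A) + (1/|C|) Σ_{y∉A} Σ_{x∈C} W(y|x)`. -/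
noncomputable def Ptot {C Y : Type*} [Fintype C] [DecidableEq C] [Fintype Y] [DecidableEq Y]
    (W : C → Y → ℝ) (d : Y → C) (A : Finset Y) : ℝ :=
  Pue W d A + (1 / (Fintype.card C : ℝ)) * ∑ y ∈ Aᶜ, ∑ x : C, W x y

/-- Forney's threshold test acceptance region with threshold `t`:
`A_t = { y : W(y|d(y)) ≥ t · Σ_{x≠d(y)} W(y|x) }`. -/
noncomputable def forneyRegion {C Y : Type*} [Fintype C] [DecidableEq C] [Fintype Y]
    (W : C → Y → ℝ) (d : Y → C) (t : ℝ) : Finset Y :=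
  Finset.univ.filter
    (fun y => t * ∑ x ∈ Finset.univ.filter (fun x => x ≠ d y), W x y ≤ W (d y) y)

/-- **Forney's threshold test is optimal** (Forney 1968): for a discrete channel
`W` with uniform prior on a finite nonempty codebook `C`, a maximum-likelihood
decoder `d`, and a threshold `t > 0`, every acceptance region `A` whose total
error probability does not exceed that of the threshold-test region `A_t` has
undetected error probability at least that of `A_t`. -/
theorem forney_threshold_test_optimal
    {C Y : Type*} [Fintype C] [DecidableEq C] [Nonempty C]
    [Fintype Y] [DecidableEq Y]
    (W : C → Y → ℝ)
    (hW0 : ∀ x y, 0 ≤ W x y)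
    (hW1 : ∀ x, ∑ y : Y, W x y = 1)
    (d : Y → C)
    (hML : ∀ y x, W x y ≤ W (d y) y)
    (t : ℝ) (ht : 0 < t)
    (A : Finset Y)
    (hA : Ptot W d A ≤ Ptot W d (forneyRegion W d t)) :
    Pue W d (forneyRegion W d t) ≤ Pue W d A := by
  classical
  set a : Y → ℝ := fun y => ∑ x ∈ Finset.univ.filter (fun x => x ≠ d y), W x y with ha
  set g : Y → ℝ := fun y => W (d y) y with hg
  set At := forneyRegion W d t with hAt
  have cpos : (0:ℝ) < (Fintype.card C : ℝ) := by exact_mod_cast Fintype.card_pos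
  have cinv : (0:ℝ) < 1 / (Fintype.card C : ℝ) := by positivity
  have hsplit : ∀ S : Finset Y, ∑ y ∈ S, ∑ x : C, W x y = ∑ y ∈ S, a y + ∑ y ∈ S, g y := by
    intro S
    rw [← Finset.sum_add_distrib]
    refine Finset.sum_congr rfl fun y _ => ?_
    rw [← Finset.sum_filter_add_sum_filter_not Finset.univ (fun x => x ≠ d y) (fun x => W x y)]
    congr 1
    simp only [not_not]
    rw [Finset.filter_eq']
    simp [hg]
  have hcompl : ∀ S : Finset Y, ∑ y ∈ Sᶜ, ∑ x : C, W x y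
      = ∑ y : Y, ∑ x : C, W x y - ∑ y ∈ S, ∑ x : C, W x y := by
    intro S
    have := Finset.sum_add_sum_compl S (fun y => ∑ x : C, W x y)
    linarith
  -- From hA derive the g-sum inequality
  have hg_ineq : ∑ y ∈ At, g y ≤ ∑ y ∈ A, g y := by
    have hA' := hA
    simp only [Ptot, Pue] at hA'
    rw [hcompl A, hcompl At, hsplit A, hsplit At] at hA'
    have h2 : (∑ y ∈ A, a y) + (∑ y : Y, ∑ x : C, W x y - ((∑ y ∈ A, a y) + ∑ y ∈ A, g y))
        ≤ (∑ y ∈ At, a y) + (∑ y : Y, ∑ x : C, W x y - ((∑ y ∈ At, a y) + ∑ y ∈ At, g y)) :=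
      le_of_mul_le_mul_left (by linarith [hA']) cinv
    linarith
  -- membership characterization
  have hmem : ∀ y, y ∈ At ↔ t * a y ≤ g y := by
    intro y
    simp [hAt, forneyRegion, ha, hg]
  -- split sums
  have h1 : t * ∑ y ∈ At \ A, a y ≤ ∑ y ∈ At \ A, g y := by
    rw [Finset.mul_sum]
    refine Finset.sum_le_sum fun y hy => ?_
    exact (hmem y).mp (Finset.mem_sdiff.mp hy).1
  have h2 : ∑ y ∈ A \ At, g y ≤ t * ∑ y ∈ A \ At, a y := by
    rw [Finset.mul_sum]
    refine Finset.sum_le_sum fun y hy => ?_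
    have := (Finset.mem_sdiff.mp hy).2
    have := (hmem y).not.mp this
    linarith
  have e1 : ∀ f : Y → ℝ, ∑ y ∈ At, f y = ∑ y ∈ At ∩ A, f y + ∑ y ∈ At \ A, f y :=
    fun f => (Finset.sum_inter_add_sum_sdiff At A f).symm
  have e2 : ∀ f : Y → ℝ, ∑ y ∈ A, f y = ∑ y ∈ At ∩ A, f y + ∑ y ∈ A \ At, f y := by
    intro f
    rw [Finset.inter_comm]
    exact (Finset.sum_inter_add_sum_sdiff A At f).symm
  have main : ∑ y ∈ At, a y ≤ ∑ y ∈ A, a y := by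
    have hgd : ∑ y ∈ At \ A, g y ≤ ∑ y ∈ A \ At, g y := by
      have := hg_ineq
      rw [e1 g, e2 g] at this
      linarith
    have htd : t * ∑ y ∈ At \ A, a y ≤ t * ∑ y ∈ A \ At, a y := by linarith
    have had : ∑ y ∈ At \ A, a y ≤ ∑ y ∈ A \ At, a y :=
      le_of_mul_le_mul_left htd ht
    rw [e1 a, e2 a]
    linarith
  simp only [Pue]
  exact mul_le_mul_of_nonneg_left main (le_of_lt cinv)
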